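/- Let A = (a_ij) be an m×m real matrix with m ≥ 1. Then A is symmetrizable if and only if A is sign symmetric and for every k with 3 ≤ k ≤ m and every sequence of pairwise distinct indices i_1, i_2, ..., i_k in {1,...,m}, one has a_{i_1,i_2}·a_{i_2,i_3}···a_{i_{k-1},i_k}·a_{i_k,i_1} = a_{i_2,i_1}·a_{i_3,i_2}···a_{i_k,i_{k-1}}·a_{i_1,i_k}. -/

import Mathlib

/-- A real square matrix is *symmetrizable* if some diagonal matrix with
strictly positive entries makes it symmetric by left multiplication. -/
def Matrix.Symmetrizable {n : Type*} [Fintype n] [DecidableEq n]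
    (A : Matrix n n ℝ) : Prop :=
  ∃ d : n → ℝ, (∀ i, 0 < d i) ∧ (Matrix.diagonal d * A).IsSymm

/-- A real square matrix is *sign symmetric* if, for all `i ≠ j`, either
`a_ij = a_ji = 0` or `a_ij · a_ji > 0`. -/
def Matrix.SignSymmetric {n : Type*} (A : Matrix n n ℝ) : Prop :=
  ∀ i j : n, i ≠ j → (A i j = 0 ∧ A j i = 0) ∨ 0 < A i j * A j i

open SimpleGraph Finset

lemma my_getVert_mem_support {V : Type*} {G : SimpleGraph V} {u v : V} (q : G.Walk u v)
    (i : ℕ) : q.getVert i ∈ q.support := by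
  induction q generalizing i with
  | nil => cases i <;> simp [SimpleGraph.Walk.getVert]
  | cons h' p' ih' =>
    cases i with
    | zero => simp
    | succ i =>
      simp only [SimpleGraph.Walk.getVert_cons_succ, SimpleGraph.Walk.support_cons, List.mem_cons]
      exact Or.inr (ih' i)

/-- getVert of a path is injective on indices `≤ length`. -/
lemma my_getVert_injOn {V : Type*} {G : SimpleGraph V} {u v : V} {p : G.Walk u v}
    (hp : p.IsPath) : ∀ a ≤ p.length, ∀ b ≤ p.length, p.getVert a = p.getVert b → a = b := by
  induction p with
  | nil => intro a ha b hb _; simp only [SimpleGraph.Walk.length_nil, Nat.le_zero] at ha hb; omega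
  | @cons u x w h q ih =>
    rw [SimpleGraph.Walk.cons_isPath_iff] at hp
    intro a ha b hb hab
    simp only [SimpleGraph.Walk.length_cons] at ha hb
    cases a with
    | zero =>
      cases b with
      | zero => rfl
      | succ b =>
        exfalso
        rw [show (SimpleGraph.Walk.cons h q).getVert 0 = u from rfl,
          SimpleGraph.Walk.getVert_cons_succ] at hab
        exact hp.2 (hab ▸ my_getVert_mem_support q b)
    | succ a =>
      cases b with
      | zero =>
        exfalso
        rw [show (SimpleGraph.Walk.cons h q).getVert 0 = u from rfl,
          SimpleGraph.Walk.getVert_cons_succ] at hab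
        exact hp.2 (hab ▸ my_getVert_mem_support q a)
      | succ b =>
        rw [SimpleGraph.Walk.getVert_cons_succ, SimpleGraph.Walk.getVert_cons_succ] at hab
        have := ih hp.1 a (by omega) b (by omega) hab
        omega

lemma path_key {n : ℕ} (A : Matrix (Fin (n+1)) (Fin (n+1)) ℝ)
    (hC : ∀ k : ℕ, 3 ≤ k → k ≤ n+1 → ∀ f : Fin k → Fin (n+1), Function.Injective f →
        ∏ i : Fin k, A (f i) (f (finRotate k i)) =
          ∏ i : Fin k, A (f (finRotate k i)) (f i))
    {G : SimpleGraph (Fin n)}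
    (hGadj : ∀ i j : Fin n, G.Adj i j →
      A i.castSucc j.castSucc ≠ 0 ∧ A j.castSucc i.castSucc ≠ 0)
    (d : Fin n → ℝ) (hd0 : ∀ i, 0 < d i)
    (hd : ∀ i j : Fin n, d i * A i.castSucc j.castSucc = d j * A j.castSucc i.castSucc)
    (j j' : Fin n) (hreach : G.Reachable j j') :
    A (Fin.last n) j.castSucc * A j'.castSucc (Fin.last n) * d j' =
      A (Fin.last n) j'.castSucc * A j.castSucc (Fin.last n) * d j := by
  classical
  by_cases hjj : j = j'
  · subst hjj; ring
  obtain ⟨w⟩ := hreach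
  set p : G.Walk j j' := (w.toPath : G.Path j j').1 with hp_def
  have hp : p.IsPath := w.toPath.2
  set t := p.length with ht_def
  have ht1 : 1 ≤ t := by
    rcases Nat.eq_zero_or_pos t with h0 | h
    · exact absurd (SimpleGraph.Walk.eq_of_length_eq_zero h0) hjj
    · exact h
  have htn : t + 1 ≤ n := by
    have := hp.length_lt
    simp only [Fintype.card_fin] at this
    omega
  set gv : ℕ → Fin n := p.getVert with hgv
  have hgv0 : gv 0 = j := p.getVert_zero
  have hgvt : gv t = j' := p.getVert_length
  have hginj : ∀ a ≤ t, ∀ b ≤ t, gv a = gv b → a = b := my_getVert_injOn hp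
  have hadj : ∀ s, s < t → G.Adj (gv s) (gv (s+1)) := fun s hs =>
    SimpleGraph.Walk.adj_getVert_succ _ hs
  set v := Fin.last n with hv
  set f : Fin (t+2) → Fin (n+1) :=
    Fin.cases v (fun s : Fin (t+1) => (gv s).castSucc) with hf_def
  have hf0 : f 0 = v := rfl
  have hfs : ∀ s : Fin (t+1), f s.succ = (gv s).castSucc := fun s => by
    simp [hf_def]
  have hfinj : Function.Injective f := by
    intro a b hab
    rcases Fin.eq_zero_or_eq_succ a with rfl | ⟨a', rfl⟩ <;>
      rcases Fin.eq_zero_or_eq_succ b with rfl | ⟨b', rfl⟩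
    · rfl
    · rw [hf0, hfs] at hab
      exact absurd hab.symm (Fin.castSucc_lt_last _).ne
    · rw [hf0, hfs] at hab
      exact absurd hab (Fin.castSucc_lt_last _).ne
    · rw [hfs, hfs] at hab
      have h1 := Fin.castSucc_injective _ hab
      have h2 := hginj a' (by omega) b' (by omega) h1
      congr 1
      exact Fin.ext h2
  have hcyc := hC (t+2) (by omega) (by omega) f hfinj
  simp only [finRotate_succ_apply] at hcyc
  have hsplit : ∀ (M : Fin (n+1) → Fin (n+1) → ℝ),
      ∏ i : Fin (t+2), M (f i) (f (i+1)) =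
        M v ((gv 0).castSucc) *
          ((∏ s ∈ Finset.range t, M ((gv s).castSucc) ((gv (s+1)).castSucc)) *
            M ((gv t).castSucc) v) := by
    intro M
    have hcs1 : ∀ i : Fin (t+1), (i.castSucc : Fin (t+2)) + 1 = i.succ := by
      intro i
      apply Fin.ext
      rw [Fin.val_add_one]
      have hne : i.castSucc ≠ Fin.last (t+1) := (Fin.castSucc_lt_last i).ne
      simp [hne]
    rw [Fin.prod_univ_castSucc]
    have hlast : M (f (Fin.last (t+1))) (f (Fin.last (t+1) + 1)) = M ((gv t).castSucc) v := by
      rw [Fin.last_add_one, hf0, ← Fin.succ_last, hfs]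
      simp
    rw [hlast]
    have hmid : ∀ i : Fin (t+1), M (f i.castSucc) (f (i.castSucc + 1)) = M (f i.castSucc) (f i.succ) := by
      intro i; rw [hcs1]
    rw [Finset.prod_congr rfl (fun i _ => hmid i), Fin.prod_univ_succ]
    have h00 : M (f (0 : Fin (t+1)).castSucc) (f (0 : Fin (t+1)).succ) = M v ((gv 0).castSucc) := by
      rw [Fin.castSucc_zero, hf0, hfs]
      simp
    rw [h00]
    have hterm : ∀ s : Fin t, M (f s.succ.castSucc) (f s.succ.succ) =
        M ((gv (s : ℕ)).castSucc) ((gv ((s : ℕ)+1)).castSucc) := by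
      intro s
      rw [← Fin.succ_castSucc, hfs, hfs]
      simp
    rw [Finset.prod_congr rfl (fun s _ => hterm s),
      Fin.prod_univ_eq_prod_range (fun s => M ((gv s).castSucc) ((gv (s+1)).castSucc)) t]
    ring
  have hLa := hsplit (fun x y => A x y)
  have hLb := hsplit (fun x y => A y x)
  rw [hLa, hLb] at hcyc
  set Pf := ∏ s ∈ Finset.range t, A ((gv s).castSucc) ((gv (s+1)).castSucc) with hPf
  set Pb := ∏ s ∈ Finset.range t, A ((gv (s+1)).castSucc) ((gv s).castSucc) with hPbdef
  have hPb0 : Pb ≠ 0 := by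
    rw [hPbdef]
    rw [Finset.prod_ne_zero_iff]
    intro s hs
    exact (hGadj _ _ (hadj s (Finset.mem_range.mp hs))).2
  set P0 := ∏ s ∈ Finset.range t, d (gv s) with hP0def
  set Q := ∏ s ∈ Finset.range t, d (gv (s+1)) with hQdef
  have hP0pos : 0 < P0 := Finset.prod_pos fun s _ => hd0 _
  have hQpos : 0 < Q := Finset.prod_pos fun s _ => hd0 _
  have htel : P0 * Pf = Q * Pb := by
    rw [hP0def, hPf, hQdef, hPbdef, ← Finset.prod_mul_distrib, ← Finset.prod_mul_distrib]
    exact Finset.prod_congr rfl fun s _ => hd _ _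
  have hPQ : P0 * d (gv t) = d (gv 0) * Q := by
    have h1 : P0 * d (gv t) = ∏ s ∈ Finset.range (t+1), d (gv s) :=
      (Finset.prod_range_succ (fun s => d (gv s)) t).symm
    have h2 : ∏ s ∈ Finset.range (t+1), d (gv s) = Q * d (gv 0) :=
      Finset.prod_range_succ' (fun s => d (gv s)) t
    rw [h1, h2]; ring
  rw [← hgv0, ← hgvt]
  have hQPb : Q * Pb ≠ 0 := mul_ne_zero hQpos.ne' hPb0
  apply mul_left_cancel₀ hQPb
  linear_combination (P0 * d (gv t)) * hcyc -
    (A v ((gv 0).castSucc) * A ((gv t).castSucc) v * d (gv t)) * htel +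
    (A ((gv 0).castSucc) v * Pb * A v ((gv t).castSucc)) * hPQ

lemma aux_sym : ∀ (n : ℕ) (A : Matrix (Fin n) (Fin n) ℝ), A.SignSymmetric →
    (∀ k : ℕ, 3 ≤ k → k ≤ n → ∀ f : Fin k → Fin n, Function.Injective f →
      ∏ i : Fin k, A (f i) (f (finRotate k i)) = ∏ i : Fin k, A (f (finRotate k i)) (f i)) →
    ∃ d : Fin n → ℝ, (∀ i, 0 < d i) ∧ ∀ i j, d i * A i j = d j * A j i := by
  intro n
  induction n with
  | zero => exact fun A _ _ => ⟨fun _ => 1, fun i => one_pos, fun i => i.elim0⟩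
  | succ n ih =>
    intro A hS hC
    classical
    have hSnz : ∀ x y : Fin (n+1), x ≠ y → A x y ≠ 0 → A y x ≠ 0 := by
      intro x y hxy hA h0
      rcases hS x y hxy with ⟨h1, _⟩ | hp
      · exact hA h1
      · rw [h0, mul_zero] at hp; exact lt_irrefl 0 hp
    -- induction hypothesis applied to the principal submatrix
    set B : Matrix (Fin n) (Fin n) ℝ :=
      Matrix.of (fun i j => A i.castSucc j.castSucc) with hB
    have hSB : B.SignSymmetric := by
      intro i j hij
      exact hS i.castSucc j.castSucc (fun h => hij (Fin.castSucc_injective _ h))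
    have hCB : ∀ k : ℕ, 3 ≤ k → k ≤ n → ∀ f : Fin k → Fin n, Function.Injective f →
        ∏ i : Fin k, B (f i) (f (finRotate k i)) = ∏ i : Fin k, B (f (finRotate k i)) (f i) := by
      intro k h3 hk f hf
      exact hC k h3 (by omega) (fun i => (f i).castSucc)
        (fun a b hab => hf (Fin.castSucc_injective _ hab))
    obtain ⟨d, hd0, hd⟩ := ih B hSB hCB
    have hd' : ∀ i j : Fin n, d i * A i.castSucc j.castSucc = d j * A j.castSucc i.castSucc := hd
    -- the graph of nonzero off-diagonal entries among the first n indices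
    set G : SimpleGraph (Fin n) :=
      { Adj := fun i j => i ≠ j ∧ A i.castSucc j.castSucc ≠ 0,
        symm := by
          refine ⟨?_⟩
          rintro i j ⟨h1, h2⟩
          exact ⟨h1.symm, hSnz _ _ (fun h => h1 (Fin.castSucc_injective _ h)) h2⟩,
        loopless := ⟨fun i h => h.1 rfl⟩ } with hG
    have hGadj : ∀ i j : Fin n, G.Adj i j →
        A i.castSucc j.castSucc ≠ 0 ∧ A j.castSucc i.castSucc ≠ 0 := by
      rintro i j ⟨h1, h2⟩
      exact ⟨h2, hSnz _ _ (fun h => h1 (Fin.castSucc_injective _ h)) h2⟩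
    have key := path_key A hC hGadj d hd0 hd'
    set v := Fin.last n with hv
    set P : Fin n → Prop := fun i => ∃ j0 : Fin n, G.Reachable i j0 ∧ A v j0.castSucc ≠ 0 with hP
    set c : Fin n → ℝ := fun i => if h : P i then
        (A v (Classical.choose h).castSucc * A (Classical.choose h).castSucc v) /
          (d (Classical.choose h) * (A (Classical.choose h).castSucc v)^2)
      else 1 with hc
    have hc0 : ∀ i, 0 < c i := by
      intro i
      by_cases h : P i
      · obtain ⟨hr, hA⟩ := Classical.choose_spec h
        set j0 := Classical.choose h with hj0
        have hne : v ≠ j0.castSucc := (Fin.castSucc_lt_last _).ne'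
        have hnum : 0 < A v j0.castSucc * A j0.castSucc v := by
          rcases hS v j0.castSucc hne with ⟨h1, _⟩ | hp
          · exact absurd h1 hA
          · exact hp
        have hAne : A j0.castSucc v ≠ 0 := hSnz _ _ hne hA
        have hsq : 0 < (A j0.castSucc v)^2 :=
          lt_of_le_of_ne (sq_nonneg _) (Ne.symm (pow_ne_zero 2 hAne))
        have : c i = (A v j0.castSucc * A j0.castSucc v) /
            (d j0 * (A j0.castSucc v)^2) := by
          rw [hc]; exact dif_pos h
        rw [this]
        exact div_pos hnum (mul_pos (hd0 _) hsq)
      · have : c i = 1 := by rw [hc]; exact dif_neg h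
        rw [this]; exact one_pos
    -- the defining relation for `c` at the new vertex
    have hc_rel : ∀ b : Fin n, A v b.castSucc = c b * d b * A b.castSucc v := by
      intro b
      by_cases hA : A v b.castSucc = 0
      · have hne : v ≠ b.castSucc := (Fin.castSucc_lt_last _).ne'
        have h2 : A b.castSucc v = 0 := by
          by_contra h0
          exact (hSnz _ _ hne.symm h0) hA
        rw [hA, h2, mul_zero]
      · have hPb : P b := ⟨b, SimpleGraph.Reachable.refl b, hA⟩
        obtain ⟨hr, hA0⟩ := Classical.choose_spec hPb
        set j0 := Classical.choose hPb with hj0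
        have hne0 : v ≠ j0.castSucc := (Fin.castSucc_lt_last _).ne'
        have hAne0 : A j0.castSucc v ≠ 0 := hSnz _ _ hne0 hA0
        have hcb : c b = (A v j0.castSucc * A j0.castSucc v) /
            (d j0 * (A j0.castSucc v)^2) := by
          rw [hc]; exact dif_pos hPb
        have hkey := key j0 b hr.symm
        rw [hcb]
        have hden : d j0 * (A j0.castSucc v)^2 ≠ 0 :=
          mul_ne_zero (hd0 j0).ne' (pow_ne_zero 2 hAne0)
        have hdj0 : d j0 ≠ 0 := (hd0 j0).ne'
        field_simp
        linear_combination (-1) * hkey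
    -- `c` is constant on reachability classes
    have hc_const : ∀ a b : Fin n, G.Reachable a b → c a = c b := by
      intro a b hr
      have hPab : P a ↔ P b :=
        ⟨fun ⟨j0, h1, h2⟩ => ⟨j0, hr.symm.trans h1, h2⟩,
         fun ⟨j0, h1, h2⟩ => ⟨j0, hr.trans h1, h2⟩⟩
      by_cases hPa : P a
      · have hPb : P b := hPab.mp hPa
        obtain ⟨hr1, hA1⟩ := Classical.choose_spec hPa
        obtain ⟨hr2, hA2⟩ := Classical.choose_spec hPb
        set j1 := Classical.choose hPa with hj1
        set j2 := Classical.choose hPb with hj2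
        have hr12 : G.Reachable j1 j2 := (hr1.symm.trans hr).trans hr2
        have hkey := key j1 j2 hr12
        have hA1' : A j1.castSucc v ≠ 0 := hSnz _ _ (Fin.castSucc_lt_last _).ne' hA1
        have hA2' : A j2.castSucc v ≠ 0 := hSnz _ _ (Fin.castSucc_lt_last _).ne' hA2
        have hca : c a = (A v j1.castSucc * A j1.castSucc v) /
            (d j1 * (A j1.castSucc v)^2) := by rw [hc]; exact dif_pos hPa
        have hcb : c b = (A v j2.castSucc * A j2.castSucc v) /
            (d j2 * (A j2.castSucc v)^2) := by rw [hc]; exact dif_pos hPb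
        rw [hca, hcb]
        rw [div_eq_div_iff
          (mul_ne_zero (hd0 j1).ne' (pow_ne_zero 2 hA1'))
          (mul_ne_zero (hd0 j2).ne' (pow_ne_zero 2 hA2'))]
        linear_combination (A j1.castSucc v * A j2.castSucc v) * hkey
      · have hPb : ¬ P b := fun h => hPa (hPab.mpr h)
        rw [hc]
        simp only [dif_neg hPa, dif_neg hPb]
    -- assemble the symmetrizer
    refine ⟨Fin.lastCases 1 (fun i => c i * d i), ?_, ?_⟩
    · intro i
      induction i using Fin.lastCases with
      | last => simp only [Fin.lastCases_last]; exact one_pos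
      | cast i => simp only [Fin.lastCases_castSucc]; exact mul_pos (hc0 i) (hd0 i)
    · intro i j
      induction i using Fin.lastCases with
      | last =>
        induction j using Fin.lastCases with
        | last => rfl
        | cast b =>
          simp only [Fin.lastCases_last, Fin.lastCases_castSucc, one_mul]
          exact hc_rel b
      | cast a =>
        induction j using Fin.lastCases with
        | last =>
          simp only [Fin.lastCases_last, Fin.lastCases_castSucc, one_mul]
          exact (hc_rel a).symm
        | cast b =>
          simp only [Fin.lastCases_castSucc]
          by_cases hab : a = b
          · subst hab; rfl
          · by_cases hA : A a.castSucc b.castSucc = 0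
            · have hne : a.castSucc ≠ b.castSucc :=
                fun h => hab (Fin.castSucc_injective _ h)
              have h2 : A b.castSucc a.castSucc = 0 := by
                by_contra h0
                exact (hSnz _ _ hne.symm h0) hA
              rw [hA, h2, mul_zero, mul_zero]
            · have hadj : G.Adj a b := ⟨hab, hA⟩
              have hcc : c a = c b := hc_const a b hadj.reachable
              rw [hcc]
              have := hd' a b
              linear_combination c b * this

/-- A real `m × m` matrix is symmetrizable if and only if it is sign symmetric
and for every `3 ≤ k ≤ m` and every injective `k`-tuple of indices
`i_1, …, i_k`, the product of the entries around the cycle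
`i_1 → i_2 → ⋯ → i_k → i_1` equals the product around the reversed cycle:
`a_{i_1 i_2} ⋯ a_{i_k i_1} = a_{i_2 i_1} ⋯ a_{i_1 i_k}`. -/
theorem symmetrizable_iff_cycles (m : ℕ) (hm : 1 ≤ m)
    (A : Matrix (Fin m) (Fin m) ℝ) :
    A.Symmetrizable ↔
      (A.SignSymmetric ∧
        ∀ k : ℕ, 3 ≤ k → k ≤ m → ∀ f : Fin k → Fin m, Function.Injective f →
          ∏ i : Fin k, A (f i) (f (finRotate k i)) =
            ∏ i : Fin k, A (f (finRotate k i)) (f i)) := by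
  constructor
  · rintro ⟨d, hd0, hsymm⟩
    have hrel : ∀ i j, d i * A i j = d j * A j i := by
      intro i j
      have := congrFun (congrFun hsymm i) j
      rw [Matrix.transpose_apply, Matrix.diagonal_mul, Matrix.diagonal_mul] at this
      exact this.symm
    constructor
    · intro i j hij
      by_cases h : A i j = 0
      · left
        refine ⟨h, ?_⟩
        have h1 := hrel i j
        rw [h, mul_zero] at h1
        exact (mul_eq_zero.mp h1.symm).resolve_left (hd0 j).ne'
      · right
        have h2 : A i j * A j i = (d i / d j) * (A i j)^2 := by
          have hdj : d j ≠ 0 := (hd0 j).ne'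
          field_simp
          linear_combination (-1) * (hrel i j)
        rw [h2]
        have : 0 < (A i j)^2 := lt_of_le_of_ne (sq_nonneg _) (Ne.symm (pow_ne_zero 2 h))
        exact mul_pos (div_pos (hd0 i) (hd0 j)) this
    · intro k h3 hk f hf
      have hprod : ∏ i : Fin k, (d (f i) * A (f i) (f (finRotate k i))) =
          ∏ i : Fin k, (d (f (finRotate k i)) * A (f (finRotate k i)) (f i)) :=
        Finset.prod_congr rfl fun i _ => hrel _ _
      rw [Finset.prod_mul_distrib, Finset.prod_mul_distrib] at hprod
      have hperm : ∏ i : Fin k, d (f (finRotate k i)) = ∏ i : Fin k, d (f i) :=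
        Equiv.prod_comp (finRotate k) (fun i => d (f i))
      rw [hperm] at hprod
      have hne : ∏ i : Fin k, d (f i) ≠ 0 := by
        rw [Finset.prod_ne_zero_iff]
        exact fun i _ => (hd0 (f i)).ne'
      exact mul_left_cancel₀ hne hprod
  · rintro ⟨hS, hC⟩
    obtain ⟨d, hd0, hrel⟩ := aux_sym m A hS hC
    refine ⟨d, hd0, ?_⟩
    ext i j
    rw [Matrix.transpose_apply, Matrix.diagonal_mul, Matrix.diagonal_mul]
    exact hrel j i
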